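/- For all integers a and b with a > b > 0, there exist integers s and t such that a divides s − b·t, 0 ≤ s and s² < a, and t ≠ 0 and t² ≤ a. (Equivalently: s ≡ b·t (mod a) with 0 ≤ s < √a and 0 < |t| ≤ √a.) -/
import Mathlib


set_option maxHeartbeats 1600000 in
/-- Correctness of the `PartialXGCD` algorithm: for integers `a > b > 0` there
exist `s`, `t` with `s ≡ b·t (mod a)`, `0 ≤ s < √a` and `0 < |t| ≤ √a`,
the square-root bounds being expressed via squares. -/
theorem partialXGCD_exists (a b : ℤ) (hab : a > b) (hb : b > 0) :
    ∃ s t : ℤ, a ∣ (s - b * t) ∧ 0 ≤ s ∧ s ^ 2 < a ∧ t ≠ 0 ∧ t ^ 2 ≤ a := by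
  have ha : (2:ℤ) ≤ a := by omega
  obtain ⟨A, haA⟩ : ∃ A : ℕ, (A : ℤ) = a := ⟨a.toNat, Int.toNat_of_nonneg (by omega)⟩
  have hA2 : 2 ≤ A := by omega
  obtain ⟨n, hn1, hn2, hn0⟩ : ∃ n : ℕ, n * n ≤ A ∧ A < (n+1) * (n+1) ∧ 1 ≤ n := by
    refine ⟨Nat.sqrt A, ?_, ?_, ?_⟩
    · have := Nat.sqrt_le' A; nlinarith
    · have := Nat.lt_succ_sqrt' A; nlinarith
    · by_contra h
      have h0 : Nat.sqrt A = 0 := by omega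
      have h1 := Nat.lt_succ_sqrt' A
      rw [h0] at h1
      norm_num at h1
      omega
  obtain ⟨m, hmlt, hcard⟩ : ∃ m : ℕ, m * m < A ∧ A < (m+1) * (n+1) := by
    by_cases h : n * n = A
    · obtain ⟨k, hk⟩ : ∃ k, n = k + 1 := ⟨n - 1, by omega⟩
      subst hk
      exact ⟨k, by nlinarith, by nlinarith⟩
    · exact ⟨n, by omega, by omega⟩
  haveI : NeZero A := ⟨by omega⟩
  -- pigeonhole
  have hpig := Finset.exists_ne_map_eq_of_card_lt_of_maps_to
    (s := (Finset.range (m+1)) ×ˢ (Finset.range (n+1)))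
    (t := (Finset.univ : Finset (ZMod A)))
    (f := fun p : ℕ × ℕ => (((p.1 : ℤ) - b * (p.2 : ℤ) : ℤ) : ZMod A))
    (by
      rw [Finset.card_product, Finset.card_range, Finset.card_range, Finset.card_univ,
        ZMod.card]
      exact hcard)
    (fun _ _ => Finset.mem_univ _)
  obtain ⟨p, hp, q, hq, hpq, hfeq⟩ := hpig
  simp only [Finset.mem_product, Finset.mem_range] at hp hq
  set s0 : ℤ := (p.1 : ℤ) - (q.1 : ℤ) with hs0
  set t0 : ℤ := (p.2 : ℤ) - (q.2 : ℤ) with ht0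
  have hdvd : a ∣ (s0 - b * t0) := by
    have hme := (ZMod.intCast_eq_intCast_iff _ _ _).mp hfeq
    have hd := Int.ModEq.dvd hme.symm
    rw [haA] at hd
    have heq : ((p.1 : ℤ) - b * (p.2 : ℤ)) - ((q.1 : ℤ) - b * (q.2 : ℤ)) = s0 - b * t0 := by
      ring
    rw [← heq]
    exact hd
  have hs0lt : s0 ^ 2 < a := by
    have h1 : (p.1 : ℤ) ≤ m := by exact_mod_cast Nat.lt_succ_iff.mp hp.1
    have h2 : (q.1 : ℤ) ≤ m := by exact_mod_cast Nat.lt_succ_iff.mp hq.1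
    have h3 : (0:ℤ) ≤ p.1 := Int.natCast_nonneg _
    have h4 : (0:ℤ) ≤ q.1 := Int.natCast_nonneg _
    have hmA : (m : ℤ) * m < a := by
      rw [← haA]; exact_mod_cast hmlt
    nlinarith
  have ht0bound : t0 ^ 2 ≤ a := by
    have h1 : (p.2 : ℤ) ≤ n := by exact_mod_cast Nat.lt_succ_iff.mp hp.2
    have h2 : (q.2 : ℤ) ≤ n := by exact_mod_cast Nat.lt_succ_iff.mp hq.2
    have h3 : (0:ℤ) ≤ p.2 := Int.natCast_nonneg _
    have h4 : (0:ℤ) ≤ q.2 := Int.natCast_nonneg _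
    have hnA : (n : ℤ) * n ≤ a := by rw [← haA]; exact_mod_cast hn1
    nlinarith
  have ht0ne : t0 ≠ 0 := by
    intro h
    rw [h, mul_zero, sub_zero] at hdvd
    obtain ⟨c, hc⟩ := hdvd
    have hs0z : s0 = 0 := by
      rcases eq_or_ne c 0 with hc0 | hc0
      · rw [hc0, mul_zero] at hc; exact hc
      · exfalso
        have h1 : 1 ≤ c ^ 2 := by
          rcases lt_or_gt_of_ne hc0 with hcc | hcc <;> nlinarith
        rw [hc] at hs0lt
        have h2 : a ^ 2 * 1 ≤ a ^ 2 * c ^ 2 :=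
          mul_le_mul_of_nonneg_left h1 (sq_nonneg a)
        nlinarith
    apply hpq
    have e1 : (p.1 : ℤ) = q.1 := by omega
    have e2 : (p.2 : ℤ) = q.2 := by omega
    exact Prod.ext (by exact_mod_cast e1) (by exact_mod_cast e2)
  rcases le_or_gt 0 s0 with hle | hlt
  · exact ⟨s0, t0, hdvd, hle, hs0lt, ht0ne, ht0bound⟩
  · refine ⟨-s0, -t0, ?_, by omega, by nlinarith, neg_ne_zero.mpr ht0ne, by nlinarith⟩
    have heq : -s0 - b * -t0 = -(s0 - b * t0) := by ring
    rw [heq]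
    exact dvd_neg.mpr hdvd
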